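/- In G ≅ ℤ² ⋊ ℤ/2ℤ (swap action) with generating set A = {a, a⁻¹, t, t⁻¹} where a = ((1,0),0) and t = ((0,0),1), any word over A representing an element with nontrivial ℤ/2ℤ-component contains an odd number of t-letters, and if it is geodesic it contains exactly one t-letter; hence the unique geodesic representing the element ((x,y),1) is aˣ t aʸ, of length |x| + |y| + 1. -/

import Mathlib

/-- The coordinate-swapping automorphism of ℤ². -/
def swapAut : MulAut (Multiplicative (ℤ × ℤ)) :=
  AddEquiv.toMultiplicative (AddEquiv.prodComm : (ℤ × ℤ) ≃+ (ℤ × ℤ))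

lemma swapAut_sq : swapAut ^ 2 = 1 := by
  refine MulEquiv.ext fun z => ?_
  show swapAut (swapAut z) = z
  cases z
  rfl

/-- The action of ℤ/2ℤ on ℤ² by swapping the two coordinates. -/
def swapAction : Multiplicative (ZMod 2) →* MulAut (Multiplicative (ℤ × ℤ)) where
  toFun ε := swapAut ^ (Multiplicative.toAdd ε).val
  map_one' := rfl
  map_mul' x y := by
    show swapAut ^ _ = swapAut ^ _ * swapAut ^ _
    rw [← pow_add]
    have key : ∀ m n : ℕ, m % 2 = n % 2 → swapAut ^ m = swapAut ^ n := by
      intro m n h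
      rw [← Nat.div_add_mod m 2, ← Nat.div_add_mod n 2, h, pow_add, pow_add,
        pow_mul, pow_mul, swapAut_sq]
      simp
    apply key
    have := ZMod.val_add (Multiplicative.toAdd x) (Multiplicative.toAdd y)
    simp only [toAdd_mul] at *
    omega

/-- The group G = ℤ² ⋊ ℤ/2ℤ with the swap action. -/
abbrev GG := SemidirectProduct (Multiplicative (ℤ × ℤ)) (Multiplicative (ZMod 2)) swapAction

/-- The generator a = ((1,0), 0). -/
def ga : GG := SemidirectProduct.inl (Multiplicative.ofAdd ((1, 0) : ℤ × ℤ))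

/-- The generator t = ((0,0), 1). -/
def gt : GG := SemidirectProduct.inr (Multiplicative.ofAdd (1 : ZMod 2))

/-- The element ((x,y), ε) of G. -/
def el (x y : ℤ) (ε : ZMod 2) : GG :=
  ⟨Multiplicative.ofAdd (x, y), Multiplicative.ofAdd ε⟩

/-- The generating set A = {a, a⁻¹, t, t⁻¹}. -/
def GenSet : Set GG := {ga, ga⁻¹, gt, gt⁻¹}

/-- `w` is a word over the alphabet A. -/
def IsWord (w : List GG) : Prop := ∀ x ∈ w, x ∈ GenSet

/-- `w` is a word over A representing the group element `g` (via its product). -/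
def Represents (w : List GG) (g : GG) : Prop := IsWord w ∧ w.prod = g

/-- The word length of `g`: minimal length of a word over A representing `g`. -/
noncomputable def wordLength (g : GG) : ℕ :=
  sInf {n | ∃ w : List GG, Represents w g ∧ w.length = n}

/-- A word over A is geodesic if no strictly shorter word over A represents
the same element. -/
def IsGeodesic (w : List GG) : Prop :=
  IsWord w ∧ ∀ v : List GG, IsWord v → v.prod = w.prod → w.length ≤ v.length

open Classical in
/-- The number of t-letters of a word (occurrences of t and t⁻¹). -/
noncomputable def tCount (w : List GG) : ℕ :=
  w.countP (fun x => decide (x = gt ∨ x = gt⁻¹))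

/-- The word aˣ over A: x letters `a` if x ≥ 0, |x| letters `a⁻¹` if x < 0. -/
def apow (x : ℤ) : List GG :=
  if 0 ≤ x then List.replicate x.toNat ga else List.replicate (-x).toNat ga⁻¹

/-- The word metric on G with respect to A. -/
noncomputable def dA (g h : GG) : ℕ := wordLength (g⁻¹ * h)

/-- The point of G reached at time i along the word w (the endpoint if i
exceeds the length of w). -/
def pt (w : List GG) (i : ℕ) : GG := (w.take i).prod

/-- Words u and w synchronously k-fellow travel. -/
def FellowTravels (k : ℕ) (u w : List GG) : Prop :=
  ∀ i : ℕ, dA (pt u i) (pt w i) ≤ k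

lemma gt_inv : gt⁻¹ = gt := by
  unfold gt; rw [← map_inv]; rfl

lemma swapAction_zero : swapAction (Multiplicative.ofAdd (0 : ZMod 2)) = 1 := by
  show swapAut ^ (ZMod.val (0 : ZMod 2)) = 1
  rw [ZMod.val_zero, pow_zero]

lemma swapAction_one : swapAction (Multiplicative.ofAdd (1 : ZMod 2)) = swapAut := by
  show swapAut ^ (ZMod.val (1 : ZMod 2)) = swapAut
  rw [ZMod.val_one, pow_one]

lemma el_zero_mul (p q X Y : ℤ) (E : ZMod 2) :
    el p q 0 * el X Y E = el (p + X) (q + Y) E := by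
  show (⟨_ * swapAction (Multiplicative.ofAdd (0:ZMod 2)) _, _⟩ : GG) = _
  rw [swapAction_zero]
  simp [el, ← ofAdd_add, Prod.ext_iff]

lemma el_one_mul (p q X Y : ℤ) (E : ZMod 2) :
    el p q 1 * el X Y E = el (p + Y) (q + X) (1 + E) := by
  show (⟨_ * swapAction (Multiplicative.ofAdd (1:ZMod 2)) _, _⟩ : GG) = _
  rw [swapAction_one]
  simp [el, swapAut, ← ofAdd_add, Prod.ext_iff]

lemma ga_eq : ga = el 1 0 0 := rfl
lemma gt_eq : gt = el 0 0 1 := rfl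
lemma ga_inv : ga⁻¹ = el (-1) 0 0 := by
  unfold ga; rw [← map_inv]; rfl

lemma el_inj {a b c d : ℤ} {e f : ZMod 2} (h : el a c e = el b d f) :
    a = b ∧ c = d ∧ e = f := by
  unfold el at h
  injection h with h1 h2
  have := Multiplicative.ofAdd.injective h1
  have := Multiplicative.ofAdd.injective h2
  simp_all [Prod.ext_iff]

lemma ga_ne_gt : ga ≠ gt := by
  rw [ga_eq, gt_eq]
  intro h
  exact absurd (el_inj h).1 (by norm_num)

lemma ga_inv_ne_gt : ga⁻¹ ≠ gt := by
  rw [ga_inv, gt_eq]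
  intro h
  exact absurd (el_inj h).1 (by norm_num)

lemma el_zero : el 0 0 0 = 1 := rfl

open Classical in
lemma tCount_cons (g : GG) (w : List GG) :
    tCount (g :: w) = tCount w + if g = gt ∨ g = gt⁻¹ then 1 else 0 := by
  by_cases h : g = gt ∨ g = gt⁻¹ <;> simp [tCount, List.countP_cons, h]

lemma main_bound : ∀ w : List GG, IsWord w → ∃ X Y : ℤ,
    w.prod = el X Y ((tCount w : ℕ) : ZMod 2) ∧
    X.natAbs + Y.natAbs + tCount w ≤ w.length := by
  intro w
  induction w with
  | nil => intro _; exact ⟨0, 0, by simp [tCount, el_zero], by simp [tCount]⟩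
  | cons g w ih =>
    intro hw
    obtain ⟨X, Y, hprod, hlen⟩ := ih (fun x hx => hw x (List.mem_cons_of_mem _ hx))
    have hg := hw g List.mem_cons_self
    rw [GenSet] at hg
    simp only [Set.mem_insert_iff, Set.mem_singleton_iff] at hg
    have hgtne : ¬ (g = gt ∨ g = gt⁻¹) → (g = ga ∨ g = ga⁻¹) := by
      rw [gt_inv]; tauto
    rcases hg with h | h | h | h
    · refine ⟨X + 1, Y, ?_, ?_⟩
      · rw [List.prod_cons, hprod, h, tCount_cons,
          if_neg (by rw [gt_inv]; push_neg; exact ⟨ga_ne_gt, ga_ne_gt⟩),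
          ga_eq, el_zero_mul]
        ring_nf
      · rw [List.length_cons, tCount_cons, if_neg (by rw [gt_inv]; push_neg; exact ⟨(h ▸ ga_ne_gt : g ≠ gt), h ▸ ga_ne_gt⟩)]
        omega
    · refine ⟨X - 1, Y, ?_, ?_⟩
      · rw [List.prod_cons, hprod, h, tCount_cons,
          if_neg (by rw [gt_inv]; push_neg; exact ⟨ga_inv_ne_gt, ga_inv_ne_gt⟩),
          ga_inv, el_zero_mul]
        ring_nf
      · rw [List.length_cons, tCount_cons,
          if_neg (by rw [gt_inv]; push_neg; exact ⟨h ▸ ga_inv_ne_gt, h ▸ ga_inv_ne_gt⟩)]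
        omega
    · refine ⟨Y, X, ?_, ?_⟩
      · rw [List.prod_cons, hprod, h, tCount_cons, if_pos (Or.inl rfl),
          gt_eq, el_one_mul]
        push_cast
        ring_nf
      · rw [List.length_cons, tCount_cons, if_pos (h ▸ Or.inl rfl)]
        omega
    · refine ⟨Y, X, ?_, ?_⟩
      · rw [List.prod_cons, hprod, h, gt_inv, tCount_cons, if_pos (Or.inl rfl),
          gt_eq, el_one_mul]
        push_cast
        ring_nf
      · rw [List.length_cons, tCount_cons, if_pos (h ▸ Or.inr rfl)]
        omega

lemma rep_ga_prod : ∀ n : ℕ, (List.replicate n ga).prod = el n 0 0 := by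
  intro n
  induction n with
  | zero => simp [el_zero]
  | succ n ih =>
    rw [List.replicate_succ, List.prod_cons, ih, ga_eq, el_zero_mul]
    push_cast; ring_nf

lemma rep_gainv_prod : ∀ n : ℕ, (List.replicate n ga⁻¹).prod = el (-n) 0 0 := by
  intro n
  induction n with
  | zero => simp [el_zero]
  | succ n ih =>
    rw [List.replicate_succ, List.prod_cons, ih, ga_inv, el_zero_mul]
    push_cast; ring_nf

lemma apow_prod (x : ℤ) : (apow x).prod = el x 0 0 := by
  unfold apow
  split
  · rw [rep_ga_prod]; congr 1; omega
  · rw [rep_gainv_prod]; congr 1; omega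

lemma apow_length (x : ℤ) : (apow x).length = x.natAbs := by
  unfold apow; split <;> simp <;> omega

lemma apow_letters (x : ℤ) : ∀ g ∈ apow x, g = ga ∨ g = ga⁻¹ := by
  unfold apow
  split <;> intro g hg <;> rw [List.eq_of_mem_replicate hg] <;> tauto

lemma apow_tCount (x : ℤ) : tCount (apow x) = 0 := by
  rw [tCount, List.countP_eq_zero]
  intro g hg
  rcases apow_letters x g hg with h | h <;> subst h <;>
    simp [ga_ne_gt, gt_inv, ga_inv_ne_gt]

-- a-only words
lemma aword : ∀ u : List GG, (∀ g ∈ u, g = ga ∨ g = ga⁻¹) → ∃ S : ℤ,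
    u.prod = el S 0 0 ∧ S.natAbs ≤ u.length ∧ (S.natAbs = u.length → u = apow S) := by
  intro u
  induction u with
  | nil => intro _; exact ⟨0, by simp [el_zero], by simp, by simp [apow]⟩
  | cons g u ih =>
    intro hu
    obtain ⟨S, hS, hle, heq⟩ := ih (fun x hx => hu x (List.mem_cons_of_mem _ hx))
    rcases hu g List.mem_cons_self with h | h
    · refine ⟨S + 1, ?_, by simp; omega, ?_⟩
      · rw [List.prod_cons, hS, h, ga_eq, el_zero_mul]; ring_nf
      · intro hlen
        simp at hlen
        have h1 : S.natAbs = u.length ∧ 0 ≤ S := by omega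
        rw [h, heq h1.1]
        have h2 : 0 ≤ S + 1 := by omega
        unfold apow
        rw [if_pos h1.2, if_pos h2]
        have : (S + 1).toNat = S.toNat + 1 := by omega
        rw [this, List.replicate_succ]
    · refine ⟨S - 1, ?_, by simp; omega, ?_⟩
      · rw [List.prod_cons, hS, h, ga_inv, el_zero_mul]; ring_nf
      · intro hlen
        simp at hlen
        have h1 : S.natAbs = u.length ∧ S ≤ 0 := by omega
        rw [h, heq h1.1]
        have h2 : ¬ 0 ≤ S - 1 := by omega
        unfold apow
        by_cases h3 : 0 ≤ S
        · have : S = 0 := le_antisymm h1.2 h3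
          subst this
          rw [if_pos le_rfl, if_neg h2]
          simp
        · rw [if_neg h3, if_neg h2]
          have : (-(S - 1)).toNat = (-S).toNat + 1 := by omega
          rw [this, List.replicate_succ]

open Classical in
lemma split_one : ∀ w : List GG, tCount w = 1 → ∃ u v : List GG,
    w = u ++ gt :: v ∧ tCount u = 0 ∧ tCount v = 0 ∧
    (∀ g ∈ u, g ∈ w) ∧ (∀ g ∈ v, g ∈ w) := by
  intro w
  induction w with
  | nil => intro h; simp [tCount] at h
  | cons g w ih =>
    intro h
    rw [tCount_cons] at h
    by_cases hg : g = gt ∨ g = gt⁻¹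
    · have hgt : g = gt := by rw [gt_inv] at hg; tauto
      have hc : tCount w = 0 := by rw [if_pos hg] at h; omega
      refine ⟨[], w, by rw [hgt]; rfl, by simp [tCount], hc, by simp, ?_⟩
      intro x hx; exact List.mem_cons_of_mem _ hx
    · rw [if_neg hg] at h
      obtain ⟨u, v, h1, h2, h3, h4, h5⟩ := ih (by omega)
      refine ⟨g :: u, v, by rw [h1]; rfl, ?_, h3, ?_, ?_⟩
      · rw [tCount_cons, if_neg hg, h2]
      · intro x hx
        rcases List.mem_cons.mp hx with h | h
        · subst h; exact List.mem_cons_self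
        · exact List.mem_cons_of_mem _ (h4 x h)
      · intro x hx; exact List.mem_cons_of_mem _ (h5 x hx)

lemma parity_odd {n : ℕ} (h : ((n : ℕ) : ZMod 2) = 1) : Odd n := by
  rw [Nat.odd_iff]
  by_contra hc
  have h0 : n % 2 = 0 := by omega
  have h1 : ((n : ℕ) : ZMod 2) = ((n % 2 : ℕ) : ZMod 2) := (ZMod.natCast_mod n 2).symm
  rw [h0] at h1
  simp at h1
  rw [h1] at h
  exact absurd h (by decide)

lemma cw_word (x y : ℤ) : IsWord (apow x ++ [gt] ++ apow y) := by
  intro g hg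
  simp only [List.mem_append, List.mem_singleton] at hg
  rcases hg with (hg | hg) | hg
  · rcases apow_letters x g hg with h | h <;> subst h <;> simp [GenSet]
  · subst hg; simp [GenSet]
  · rcases apow_letters y g hg with h | h <;> subst h <;> simp [GenSet]

lemma cw_prod (x y : ℤ) : (apow x ++ [gt] ++ apow y).prod = el x y 1 := by
  rw [List.prod_append, List.prod_append, apow_prod, apow_prod, List.prod_singleton,
    gt_eq, el_zero_mul, el_one_mul]
  ring_nf

lemma cw_length (x y : ℤ) :
    (apow x ++ [gt] ++ apow y).length = x.natAbs + y.natAbs + 1 := by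
  simp [apow_length]
  omega

/-- Any word over A representing ((x,y),1) has an odd number of t-letters;
a geodesic such word has exactly one t-letter; and aˣ t aʸ is the unique
geodesic representing ((x,y),1), of length |x| + |y| + 1. -/
theorem top_layer_unique_geodesic (x y : ℤ) :
    (∀ w : List GG, Represents w (el x y 1) → Odd (tCount w)) ∧
    (∀ w : List GG, Represents w (el x y 1) → IsGeodesic w → tCount w = 1) ∧
    Represents (apow x ++ [gt] ++ apow y) (el x y 1) ∧
    IsGeodesic (apow x ++ [gt] ++ apow y) ∧
    (apow x ++ [gt] ++ apow y).length = x.natAbs + y.natAbs + 1 ∧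
    (∀ w : List GG, Represents w (el x y 1) → IsGeodesic w →
      w = apow x ++ [gt] ++ apow y) := by
  have hodd : ∀ w : List GG, Represents w (el x y 1) → Odd (tCount w) := by
    intro w ⟨hw, hp⟩
    obtain ⟨X, Y, hprod, _⟩ := main_bound w hw
    rw [hp] at hprod
    exact parity_odd (el_inj hprod.symm).2.2.symm.symm
  have hlb : ∀ w : List GG, Represents w (el x y 1) →
      x.natAbs + y.natAbs + tCount w ≤ w.length := by
    intro w ⟨hw, hp⟩
    obtain ⟨X, Y, hprod, hlen⟩ := main_bound w hw
    rw [hp] at hprod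
    obtain ⟨hX, hY, _⟩ := el_inj hprod.symm
    omega
  have hrep : Represents (apow x ++ [gt] ++ apow y) (el x y 1) :=
    ⟨cw_word x y, cw_prod x y⟩
  have hgeo : IsGeodesic (apow x ++ [gt] ++ apow y) := by
    refine ⟨cw_word x y, fun v hv hvp => ?_⟩
    rw [cw_prod] at hvp
    have h1 := hlb v ⟨hv, hvp⟩
    have h2 : 1 ≤ tCount v := (hodd v ⟨hv, hvp⟩).pos
    rw [cw_length]
    omega
  have hone : ∀ w : List GG, Represents w (el x y 1) → IsGeodesic w → tCount w = 1 := by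
    intro w hw hg
    have h1 := hlb w hw
    have h2 := hg.2 _ (cw_word x y) (by rw [cw_prod, hw.2])
    rw [cw_length] at h2
    have h3 := (hodd w hw).pos
    omega
  refine ⟨hodd, hone, hrep, hgeo, cw_length x y, ?_⟩
  intro w hw hg
  obtain ⟨u, v, hsplit, hu0, hv0, humem, hvmem⟩ := split_one w (hone w hw hg)
  have hua : ∀ g ∈ u, g = ga ∨ g = ga⁻¹ := by
    intro g hgu
    have hgen : g ∈ GenSet := hw.1 g (hsplit ▸ humem g hgu)
    have hnp : ¬ (g = gt ∨ g = gt⁻¹) := by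
      have := List.countP_eq_zero.mp hu0 g hgu
      simpa using this
    rw [GenSet] at hgen
    simp only [Set.mem_insert_iff, Set.mem_singleton_iff] at hgen
    tauto
  have hva : ∀ g ∈ v, g = ga ∨ g = ga⁻¹ := by
    intro g hgv
    have hgen : g ∈ GenSet := hw.1 g (hsplit ▸ hvmem g hgv)
    have hnp : ¬ (g = gt ∨ g = gt⁻¹) := by
      have := List.countP_eq_zero.mp hv0 g hgv
      simpa using this
    rw [GenSet] at hgen
    simp only [Set.mem_insert_iff, Set.mem_singleton_iff] at hgen
    tauto
  obtain ⟨S1, hS1, hle1, heq1⟩ := aword u hua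
  obtain ⟨S2, hS2, hle2, heq2⟩ := aword v hva
  have hprodw : w.prod = el S1 S2 1 := by
    rw [hsplit, List.prod_append, List.prod_cons, hS1, hS2, gt_eq,
      el_one_mul, el_zero_mul]
    ring_nf
  rw [hw.2] at hprodw
  obtain ⟨hx, hy, _⟩ := el_inj hprodw
  have hlenw : w.length = u.length + v.length + 1 := by rw [hsplit]; simp; omega
  have h2 := hg.2 _ (cw_word x y) (by rw [cw_prod, hw.2])
  rw [cw_length] at h2
  have hu : u.length = x.natAbs := by omega
  have hv : v.length = y.natAbs := by omega
  rw [hsplit, heq1 (by omega), heq2 (by omega), hx, hy, List.append_assoc]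
  rfl
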